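/- If ψ, ψ₀, ξ satisfy ψ₀(n(p)) + ∑_{j=1}^{n(p)} ψ(e_j) = ξ(i) for every partition p of {1,...,i} and every i ≥ 1, and if partitions with at least two blocks of arbitrary sizes occur (e.g., ψ₀(k) > 0 for all k < some bound), then ψ must be affine: there exist constants a, b with ψ(e) = a·e + b for all sizes e that actually occur, and correspondingly ψ₀(n) = ξ(i) - a·i - b·n. -/
import Mathlib


/-- **Characterization of the urn weights.**  Suppose the weights satisfy the
Exchangeability Condition constraint `ψ₀(n(p)) + ∑_{j=1}^{n(p)} ψ(e_j) = ξ(i)` for every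
nonempty partition of `{1,…,i}` (encoded as a multiset of positive block sizes) and every
`i ≥ 1` — in particular partitions with at least two blocks of arbitrary sizes occur.
Then `ψ` must be affine: there are constants `a, b` with `ψ(e) = a·e + b` for all
occurring block sizes `e ≥ 1`, and correspondingly `ψ₀(n) = ξ(i) − a·i − b·n` for all
`1 ≤ n ≤ i`. -/
theorem urn_weights_affine (ψ ψ0 ξ : ℕ → ℝ)
    (hEC : ∀ s : Multiset ℕ, (∀ e ∈ s, 0 < e) → s ≠ 0 →
      ψ0 (Multiset.card s) + (s.map ψ).sum = ξ s.sum) :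
    ∃ a b : ℝ,
      (∀ e : ℕ, 1 ≤ e → ψ e = a * e + b) ∧
      (∀ n i : ℕ, 1 ≤ n → n ≤ i → ψ0 n = ξ i - a * i - b * n) := by
  set a : ℝ := ψ 2 - ψ 1 with ha
  set b : ℝ := ψ 1 - a with hb
  -- step lemma
  have hstep : ∀ e : ℕ, 1 ≤ e → ψ (e + 1) = ψ e + a := by
    intro e he
    have h1 := hEC (e ::ₘ {2}) (by intro x hx; simp at hx; rcases hx with h | h <;> omega)
      (by simp)
    have h2 := hEC ((e + 1) ::ₘ {1}) (by intro x hx; simp at hx; rcases hx with h | h <;> omega)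
      (by simp)
    simp [Multiset.map_cons, Multiset.sum_cons] at h1 h2
    have : e + 2 = e + 1 + 1 := by ring
    rw [this] at h1
    have := h1.trans h2.symm
    simp [ha]
    linarith [this]
  have haff : ∀ e : ℕ, 1 ≤ e → ψ e = a * e + b := by
    intro e he
    induction e with
    | zero => omega
    | succ k ih =>
      rcases Nat.eq_or_lt_of_le he with h | h
      · have hk0 : k = 0 := by omega
        subst hk0
        simp only [hb]
        push_cast
        ring
      · have hk : 1 ≤ k := by omega
        rw [hstep k hk, ih hk]
        push_cast
        ring
  refine ⟨a, b, haff, ?_⟩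
  intro n i hn hi
  have h := hEC ((i - n + 1) ::ₘ Multiset.replicate (n - 1) 1)
    (by
      intro x hx
      simp [Multiset.mem_replicate] at hx
      rcases hx with h | h <;> omega)
    (by simp)
  have hcard : Multiset.card ((i - n + 1) ::ₘ Multiset.replicate (n - 1) 1) = n := by
    simp; omega
  have hsum : ((i - n + 1) ::ₘ Multiset.replicate (n - 1) 1).sum = i := by
    simp [Multiset.sum_replicate]; omega
  rw [hcard, hsum] at h
  rw [Multiset.map_cons, Multiset.sum_cons, Multiset.map_replicate, Multiset.sum_replicate] at h
  rw [haff (i - n + 1) (by omega), haff 1 le_rfl] at h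
  have hcast : ((i - n + 1 : ℕ) : ℝ) = (i : ℝ) - n + 1 := by
    push_cast [Nat.cast_sub hi]; ring
  rw [hcast] at h
  have hncast : ((n - 1 : ℕ) : ℝ) = (n : ℝ) - 1 := by
    push_cast [Nat.cast_sub hn]; ring
  rw [nsmul_eq_mul, hncast] at h
  push_cast at h ⊢
  linarith [h]
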